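/- For every index p ∈ {1,…,d}, E[ (uᵀAu · u_p²)² ] = 3·(tr(A))² + 6·Σ_{i=1}^d A_{i,i}² + 24·A_{p,p}·tr(A) + 72·A_{p,p}² + 3·Σ_{i>j} (A_{i,j} + A_{j,i})² + 12·Σ_{i : i>p} (A_{i,p} + A_{p,i})² + 12·Σ_{j : j<p} (A_{p,j} + A_{j,p})², where Σ_{i>j} ranges over all pairs (i,j) with 1 ≤ j < i ≤ d. -/

import Mathlib

open MeasureTheory ProbabilityTheory Finset

noncomputable def stdGaussianVec (d : ℕ) : Measure (Fin d → ℝ) :=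
  Measure.pi fun _ => gaussianReal 0 1

def quadForm {d : ℕ} (A : Matrix (Fin d) (Fin d) ℝ) (u : Fin d → ℝ) : ℝ :=
  ∑ i, ∑ j, A i j * u i * u j

section Aux
open Real
open scoped ENNReal NNReal


-- bound lemma
lemma gb (n : ℕ) (x : ℝ) : |x ^ n * Real.exp (-x^2/2)| ≤ ((n.factorial : ℝ) * Real.exp 1) * Real.exp (-(1/4) * x^2) := by
  rw [abs_mul, abs_pow, abs_of_pos (Real.exp_pos _)]
  have h1 : |x| ^ n ≤ (n.factorial : ℝ) * Real.exp |x| := by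
    have := Real.pow_div_factorial_le_exp (x := |x|) (abs_nonneg x) n
    have hn : (0:ℝ) < n.factorial := by positivity
    calc |x| ^ n = (|x| ^ n / n.factorial) * n.factorial := by field_simp
    _ ≤ Real.exp |x| * n.factorial := by gcongr
    _ = (n.factorial : ℝ) * Real.exp |x| := by ring
  have h2 : |x| ≤ x^2/4 + 1 := by
    nlinarith [sq_nonneg (|x| - 2), sq_abs x, abs_nonneg x]
  calc |x| ^ n * Real.exp (-x ^ 2 / 2) ≤ ((n.factorial : ℝ) * Real.exp |x|) * Real.exp (-x^2/2) := by
        gcongr <;> first | positivity | nlinarith [h2, sq_nonneg x]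
    _ = (n.factorial : ℝ) * Real.exp (|x| + -x^2/2) := by rw [Real.exp_add]; ring
    _ ≤ (n.factorial : ℝ) * Real.exp (1 + -(1/4) * x^2) :=
        mul_le_mul_of_nonneg_left (Real.exp_le_exp.mpr (by nlinarith)) (by positivity)
    _ = ((n.factorial : ℝ) * Real.exp 1) * Real.exp (-(1/4) * x^2) := by rw [Real.exp_add]; ring

lemma integrable_g (n : ℕ) : Integrable (fun x : ℝ => x ^ n * Real.exp (-x^2/2)) := by
  refine Integrable.mono' (((integrable_exp_neg_mul_sq (by norm_num : (0:ℝ) < 1/4)).const_mul ((n.factorial : ℝ) * Real.exp 1))) ?_ (Filter.Eventually.of_forall fun x => ?_)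
  · exact (Continuous.mul (continuous_pow n) (Real.continuous_exp.comp (by continuity))).aestronglyMeasurable
  · exact gb n x

noncomputable def I (n : ℕ) : ℝ := ∫ x, x^n * Real.exp (-x^2/2)

lemma I_rec (n : ℕ) : I (n+2) = (n+1) * I n := by
  have hder : ∀ x : ℝ, HasDerivAt (fun x : ℝ => x^(n+1) * Real.exp (-x^2/2))
      ((n+1) * (x^n * Real.exp (-x^2/2)) - x^(n+2) * Real.exp (-x^2/2)) x := by
    intro x
    have h1 : HasDerivAt (fun x : ℝ => x^(n+1)) ((n+1) * x^n) x := by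
      simpa using hasDerivAt_pow (n+1) x
    have h2 : HasDerivAt (fun x : ℝ => -x^2/2) (-x) x := by
      have := (hasDerivAt_pow 2 x).neg.div_const 2
      simpa using this.congr_deriv (by push_cast; ring)
    have h3 := (h2.exp)
    have := h1.mul h3
    exact this.congr_deriv (by ring)
  have hint : Integrable (fun x : ℝ => (n+1 : ℝ) * (x^n * Real.exp (-x^2/2)) - x^(n+2) * Real.exp (-x^2/2)) :=
    ((integrable_g n).const_mul _).sub (integrable_g (n+2))
  have h0 := integral_eq_zero_of_hasDerivAt_of_integrable hder hint (integrable_g (n+1))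
  rw [integral_sub ((integrable_g n).const_mul _) (integrable_g (n+2)), integral_const_mul _ _] at h0
  have : I (n+2) = ((n:ℝ)+1) * I n := by unfold I; linarith
  simpa using this

lemma I_one : I 1 = 0 := by
  have hder : ∀ x : ℝ, HasDerivAt (fun x : ℝ => -Real.exp (-x^2/2)) (x^1 * Real.exp (-x^2/2)) x := by
    intro x
    have h2 : HasDerivAt (fun x : ℝ => -x^2/2) (-x) x := by
      have := (hasDerivAt_pow 2 x).neg.div_const 2
      simpa using this.congr_deriv (by push_cast; ring)
    have := h2.exp.neg
    exact this.congr_deriv (by ring)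
  have h0 := integral_eq_zero_of_hasDerivAt_of_integrable hder (integrable_g 1)
    (((by simpa using integrable_g 0 : Integrable fun x : ℝ => Real.exp (-x^2/2))).neg)
  simpa [I] using h0

lemma I_zero : I 0 = Real.sqrt (2*π) := by
  have := integral_gaussian (1/2)
  simp only [I, pow_zero, one_mul]
  rw [show (π / (1/2)) = 2 * π by ring] at this
  rw [← this]
  congr 1 with x
  congr 1
  ring


noncomputable def M (n : ℕ) : ℝ := ∫ x, x ^ n ∂(gaussianReal 0 1)

lemma pdf_eq (x : ℝ) : gaussianPDFReal 0 1 x = (Real.sqrt (2*π))⁻¹ * Real.exp (-x^2/2) := by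
  simp [gaussianPDFReal]

lemma gauss_withDensity : gaussianReal 0 1
    = volume.withDensity (fun x => ((gaussianPDFReal 0 1 x).toNNReal : ℝ≥0∞)) := by
  rw [gaussianReal_of_var_ne_zero 0 one_ne_zero]
  rfl

lemma integral_gauss (g : ℝ → ℝ) :
    ∫ x, g x ∂(gaussianReal 0 1) = ∫ x, gaussianPDFReal 0 1 x * g x := by
  rw [gauss_withDensity, integral_withDensity_eq_integral_smul
    ((measurable_gaussianPDFReal 0 1).real_toNNReal) g]
  congr 1 with x
  simp [NNReal.smul_def, Real.coe_toNNReal _ (gaussianPDFReal_nonneg 0 1 x)]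

lemma integrable_gauss_iff (g : ℝ → ℝ) :
    Integrable g (gaussianReal 0 1) ↔ Integrable (fun x => gaussianPDFReal 0 1 x * g x) := by
  rw [gauss_withDensity, integrable_withDensity_iff_integrable_smul
    ((measurable_gaussianPDFReal 0 1).real_toNNReal)]
  constructor <;> intro h <;> refine h.congr (Filter.Eventually.of_forall fun x => ?_) <;>
    simp [NNReal.smul_def, Real.coe_toNNReal _ (gaussianPDFReal_nonneg 0 1 x)]

lemma M_eq (n : ℕ) : M n = (Real.sqrt (2*π))⁻¹ * I n := by
  rw [M, integral_gauss]
  unfold I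
  rw [← integral_const_mul]
  congr 1 with x
  rw [pdf_eq]
  ring

lemma integrable_pow_gauss (n : ℕ) : Integrable (fun x => x ^ n) (gaussianReal 0 1) := by
  rw [integrable_gauss_iff]
  refine ((integrable_g n).const_mul ((Real.sqrt (2*π))⁻¹)).congr (Filter.Eventually.of_forall fun x => ?_)
  simp only [pdf_eq]; ring

lemma M_zero : M 0 = 1 := by simp [M]
lemma M_rec (n : ℕ) : M (n+2) = (n+1) * M n := by rw [M_eq, M_eq, I_rec]; ring
lemma M_one : M 1 = 0 := by rw [M_eq, I_one, mul_zero]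
lemma M_two : M 2 = 1 := by rw [show 2 = 0+2 from rfl, M_rec, M_zero]; norm_num
lemma M_three : M 3 = 0 := by rw [show 3 = 1+2 from rfl, M_rec, M_one]; ring
lemma M_four : M 4 = 3 := by rw [show 4 = 2+2 from rfl, M_rec, M_two]; norm_num
lemma M_five : M 5 = 0 := by rw [show 5 = 3+2 from rfl, M_rec, M_three]; ring
lemma M_six : M 6 = 15 := by rw [show 6 = 4+2 from rfl, M_rec, M_four]; norm_num
lemma M_seven : M 7 = 0 := by rw [show 7 = 5+2 from rfl, M_rec, M_five]; ring
lemma M_eight : M 8 = 105 := by rw [show 8 = 6+2 from rfl, M_rec, M_six]; norm_num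


lemma integral_monomial {d : ℕ} (e : Fin d → ℕ) :
    ∫ u, ∏ m, (u m) ^ (e m) ∂(stdGaussianVec d) = ∏ m, M (e m) := by
  letI : MeasureSpace ℝ := ⟨gaussianReal 0 1⟩
  haveI : SigmaFinite (volume : Measure ℝ) := inferInstanceAs (SigmaFinite (gaussianReal 0 1))
  exact MeasureTheory.integral_fintype_prod_eq_prod (ι := Fin d) (f := fun m (x : ℝ) => x ^ e m)

lemma integrable_monomial {d : ℕ} (e : Fin d → ℕ) :
    Integrable (fun u => ∏ m, (u m) ^ (e m)) (stdGaussianVec d) := by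
  letI : MeasureSpace ℝ := ⟨gaussianReal 0 1⟩
  haveI : SigmaFinite (volume : Measure ℝ) := inferInstanceAs (SigmaFinite (gaussianReal 0 1))
  exact MeasureTheory.Integrable.fintype_prod (f := fun m (x : ℝ) => x ^ e m)
    (fun m => integrable_pow_gauss (e m))

def exps {d : ℕ} (p i j k l : Fin d) (m : Fin d) : ℕ :=
  (if m = i then 1 else 0) + (if m = j then 1 else 0) + (if m = k then 1 else 0)
    + (if m = l then 1 else 0) + (if m = p then 4 else 0)

noncomputable def Dd {d : ℕ} (a b : Fin d) : ℝ := if a = b then 1 else 0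

lemma prod_M_support {d : ℕ} (e : Fin d → ℕ) (s : Finset (Fin d)) (h0 : ∀ m ∉ s, e m = 0) :
    ∏ m, M (e m) = ∏ m ∈ s, M (e m) :=
  (Finset.prod_subset s.subset_univ fun x _ hx => by rw [h0 x hx, M_zero]).symm

lemma Phi_eval {d : ℕ} (p i j k l : Fin d) :
    (∏ m, M (exps p i j k l m))
      = 3*(Dd i j * Dd k l + Dd i k * Dd j l + Dd i l * Dd j k)
        + 12*(Dd p i * Dd p j * Dd k l + Dd p i * Dd p k * Dd j l + Dd p i * Dd p l * Dd j k
            + Dd p j * Dd p k * Dd i l + Dd p j * Dd p l * Dd i k + Dd p k * Dd p l * Dd i j)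
        + 24*(Dd p i * Dd p j * Dd p k * Dd p l) := by
  rcases eq_or_ne p i with rfl | hi
  · rcases eq_or_ne p j with rfl | hj
    · rcases eq_or_ne p k with rfl | hk
      · rcases eq_or_ne p l with rfl | hl
        · rw [prod_M_support (exps p p p p p) {p} (by intro m hm; simp at hm; simp [exps, hm]), Finset.prod_singleton]
          simp [exps, Dd, M_eight]
          try norm_num
        · refine Eq.trans (Finset.prod_eq_zero (Finset.mem_univ (l : Fin d)) ?_) ?_
          · simp [exps, hl, hl.symm, M_one]
          · simp [Dd, hl, hl.symm]
      · rcases eq_or_ne p l with rfl | hl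
        · refine Eq.trans (Finset.prod_eq_zero (Finset.mem_univ (k : Fin d)) ?_) ?_
          · simp [exps, hk, hk.symm, M_one]
          · simp [Dd, hk, hk.symm]
        · rcases eq_or_ne k l with rfl | hkl
          · rw [prod_M_support (exps p p p k k) {k, p} (by intro m hm; simp at hm; simp [exps, hm.1, hm.2]), Finset.prod_pair (Ne.symm hk)]
            simp [exps, Dd, hk, hk.symm, M_two, M_six]
            try norm_num
          · refine Eq.trans (Finset.prod_eq_zero (Finset.mem_univ (k : Fin d)) ?_) ?_
            · simp [exps, hk, hk.symm, hkl, hkl.symm, hl, hl.symm, M_one]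
            · simp [Dd, hk, hk.symm, hkl, hkl.symm, hl, hl.symm]
    · rcases eq_or_ne p k with rfl | hk
      · rcases eq_or_ne p l with rfl | hl
        · refine Eq.trans (Finset.prod_eq_zero (Finset.mem_univ (j : Fin d)) ?_) ?_
          · simp [exps, hj, hj.symm, M_one]
          · simp [Dd, hj, hj.symm]
        · rcases eq_or_ne j l with rfl | hjl
          · rw [prod_M_support (exps p p j p j) {j, p} (by intro m hm; simp at hm; simp [exps, hm.1, hm.2]), Finset.prod_pair (Ne.symm hj)]
            simp [exps, Dd, hj, hj.symm, M_two, M_six]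
            try norm_num
          · refine Eq.trans (Finset.prod_eq_zero (Finset.mem_univ (j : Fin d)) ?_) ?_
            · simp [exps, hj, hj.symm, hjl, hjl.symm, hl, hl.symm, M_one]
            · simp [Dd, hj, hj.symm, hjl, hjl.symm, hl, hl.symm]
      · rcases eq_or_ne p l with rfl | hl
        · rcases eq_or_ne j k with rfl | hjk
          · rw [prod_M_support (exps p p j j p) {j, p} (by intro m hm; simp at hm; simp [exps, hm.1, hm.2]), Finset.prod_pair (Ne.symm hj)]
            simp [exps, Dd, hj, hj.symm, M_two, M_six]
            try norm_num
          · refine Eq.trans (Finset.prod_eq_zero (Finset.mem_univ (j : Fin d)) ?_) ?_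
            · simp [exps, hj, hj.symm, hjk, hjk.symm, hk, hk.symm, M_one]
            · simp [Dd, hj, hj.symm, hjk, hjk.symm, hk, hk.symm]
        · refine Eq.trans (Finset.prod_eq_zero (Finset.mem_univ (p : Fin d)) ?_) ?_
          · simp [exps, hj, hj.symm, hk, hk.symm, hl, hl.symm, M_five]
          · simp [Dd, hj, hj.symm, hk, hk.symm, hl, hl.symm]
  · rcases eq_or_ne p j with rfl | hj
    · rcases eq_or_ne p k with rfl | hk
      · rcases eq_or_ne p l with rfl | hl
        · refine Eq.trans (Finset.prod_eq_zero (Finset.mem_univ (i : Fin d)) ?_) ?_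
          · simp [exps, hi, hi.symm, M_one]
          · simp [Dd, hi, hi.symm]
        · rcases eq_or_ne i l with rfl | hil
          · rw [prod_M_support (exps p i p p i) {i, p} (by intro m hm; simp at hm; simp [exps, hm.1, hm.2]), Finset.prod_pair (Ne.symm hi)]
            simp [exps, Dd, hi, hi.symm, M_two, M_six]
            try norm_num
          · refine Eq.trans (Finset.prod_eq_zero (Finset.mem_univ (i : Fin d)) ?_) ?_
            · simp [exps, hi, hi.symm, hil, hil.symm, hl, hl.symm, M_one]
            · simp [Dd, hi, hi.symm, hil, hil.symm, hl, hl.symm]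
      · rcases eq_or_ne p l with rfl | hl
        · rcases eq_or_ne i k with rfl | hik
          · rw [prod_M_support (exps p i p i p) {i, p} (by intro m hm; simp at hm; simp [exps, hm.1, hm.2]), Finset.prod_pair (Ne.symm hi)]
            simp [exps, Dd, hi, hi.symm, M_two, M_six]
            try norm_num
          · refine Eq.trans (Finset.prod_eq_zero (Finset.mem_univ (i : Fin d)) ?_) ?_
            · simp [exps, hi, hi.symm, hik, hik.symm, hk, hk.symm, M_one]
            · simp [Dd, hi, hi.symm, hik, hik.symm, hk, hk.symm]
        · refine Eq.trans (Finset.prod_eq_zero (Finset.mem_univ (p : Fin d)) ?_) ?_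
          · simp [exps, hi, hi.symm, hk, hk.symm, hl, hl.symm, M_five]
          · simp [Dd, hi, hi.symm, hk, hk.symm, hl, hl.symm]
    · rcases eq_or_ne p k with rfl | hk
      · rcases eq_or_ne p l with rfl | hl
        · rcases eq_or_ne i j with rfl | hij
          · rw [prod_M_support (exps p i i p p) {i, p} (by intro m hm; simp at hm; simp [exps, hm.1, hm.2]), Finset.prod_pair (Ne.symm hi)]
            simp [exps, Dd, hi, hi.symm, M_two, M_six]
            try norm_num
          · refine Eq.trans (Finset.prod_eq_zero (Finset.mem_univ (i : Fin d)) ?_) ?_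
            · simp [exps, hi, hi.symm, hij, hij.symm, hj, hj.symm, M_one]
            · simp [Dd, hi, hi.symm, hij, hij.symm, hj, hj.symm]
        · refine Eq.trans (Finset.prod_eq_zero (Finset.mem_univ (p : Fin d)) ?_) ?_
          · simp [exps, hi, hi.symm, hj, hj.symm, hl, hl.symm, M_five]
          · simp [Dd, hi, hi.symm, hj, hj.symm, hl, hl.symm]
      · rcases eq_or_ne p l with rfl | hl
        · refine Eq.trans (Finset.prod_eq_zero (Finset.mem_univ (p : Fin d)) ?_) ?_
          · simp [exps, hi, hi.symm, hj, hj.symm, hk, hk.symm, M_five]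
          · simp [Dd, hi, hi.symm, hj, hj.symm, hk, hk.symm]
        · rcases eq_or_ne i j with rfl | hij
          · rcases eq_or_ne k l with rfl | hkl
            · rcases eq_or_ne i k with rfl | hik
              · rw [prod_M_support (exps p i i i i) {i, p} (by intro m hm; simp at hm; simp [exps, hm.1, hm.2]), Finset.prod_pair (Ne.symm hi)]
                simp [exps, Dd, hi, hi.symm, M_four]
                try norm_num
              · rw [prod_M_support (exps p i i k k) {i, k, p} (by intro m hm; simp at hm; simp [exps, hm.1, hm.2.1, hm.2.2]), Finset.prod_insert (show (i:Fin d) ∉ ({k, p} : Finset (Fin d)) by simp [hik, hi.symm]), Finset.prod_pair (Ne.symm hk)]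
                simp [exps, Dd, hi, hi.symm, hk, hk.symm, hik, hik.symm, M_two, M_four]
                try norm_num
            · rcases eq_or_ne i k with rfl | hik
              · refine Eq.trans (Finset.prod_eq_zero (Finset.mem_univ (l : Fin d)) ?_) ?_
                · simp [exps, hkl, hkl.symm, hl, hl.symm, hi, hi.symm, M_one]
                · simp [Dd, hkl, hkl.symm, hl, hl.symm, hi, hi.symm]
              · refine Eq.trans (Finset.prod_eq_zero (Finset.mem_univ (k : Fin d)) ?_) ?_
                · simp [exps, hik, hik.symm, hkl, hkl.symm, hk, hk.symm, hi, hi.symm, hl, hl.symm, M_one]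
                · simp [Dd, hik, hik.symm, hkl, hkl.symm, hk, hk.symm, hi, hi.symm, hl, hl.symm]
          · rcases eq_or_ne k l with rfl | hkl
            · rcases eq_or_ne j k with rfl | hjk
              · refine Eq.trans (Finset.prod_eq_zero (Finset.mem_univ (i : Fin d)) ?_) ?_
                · simp [exps, hij, hij.symm, hi, hi.symm, hj, hj.symm, M_one]
                · simp [Dd, hij, hij.symm, hi, hi.symm, hj, hj.symm]
              · refine Eq.trans (Finset.prod_eq_zero (Finset.mem_univ (j : Fin d)) ?_) ?_
                · simp [exps, hij, hij.symm, hjk, hjk.symm, hj, hj.symm, hi, hi.symm, hk, hk.symm, M_one]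
                · simp [Dd, hij, hij.symm, hjk, hjk.symm, hj, hj.symm, hi, hi.symm, hk, hk.symm]
            · rcases eq_or_ne i k with rfl | hik
              · rcases eq_or_ne j l with rfl | hjl
                · rw [prod_M_support (exps p i j i j) {i, j, p} (by intro m hm; simp at hm; simp [exps, hm.1, hm.2.1, hm.2.2]), Finset.prod_insert (show (i:Fin d) ∉ ({j, p} : Finset (Fin d)) by simp [hij, hi.symm]), Finset.prod_pair (Ne.symm hj)]
                  simp [exps, Dd, hi, hi.symm, hj, hj.symm, hij, hij.symm, M_two, M_four]
                  try norm_num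
                · refine Eq.trans (Finset.prod_eq_zero (Finset.mem_univ (j : Fin d)) ?_) ?_
                  · simp [exps, hij, hij.symm, hjl, hjl.symm, hj, hj.symm, hi, hi.symm, hl, hl.symm, hkl, hkl.symm, M_one]
                  · simp [Dd, hij, hij.symm, hjl, hjl.symm, hj, hj.symm, hi, hi.symm, hl, hl.symm, hkl, hkl.symm]
              · rcases eq_or_ne i l with rfl | hil
                · rcases eq_or_ne j k with rfl | hjk
                  · rw [prod_M_support (exps p i j j i) {i, j, p} (by intro m hm; simp at hm; simp [exps, hm.1, hm.2.1, hm.2.2]), Finset.prod_insert (show (i:Fin d) ∉ ({j, p} : Finset (Fin d)) by simp [hij, hi.symm]), Finset.prod_pair (Ne.symm hj)]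
                    simp [exps, Dd, hi, hi.symm, hj, hj.symm, hij, hij.symm, M_two, M_four]
                    try norm_num
                  · refine Eq.trans (Finset.prod_eq_zero (Finset.mem_univ (j : Fin d)) ?_) ?_
                    · simp [exps, hij, hij.symm, hjk, hjk.symm, hj, hj.symm, hi, hi.symm, hk, hk.symm, hkl, hkl.symm, M_one]
                    · simp [Dd, hij, hij.symm, hjk, hjk.symm, hj, hj.symm, hi, hi.symm, hk, hk.symm, hkl, hkl.symm]
                · refine Eq.trans (Finset.prod_eq_zero (Finset.mem_univ (i : Fin d)) ?_) ?_
                  · simp [exps, hij, hij.symm, hik, hik.symm, hil, hil.symm, hi, hi.symm, hj, hj.symm, hk, hk.symm, hl, hl.symm, M_one]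
                  · simp [Dd, hij, hij.symm, hik, hik.symm, hil, hil.symm, hi, hi.symm, hj, hj.symm, hk, hk.symm, hl, hl.symm]


lemma prod_pow_single {d : ℕ} (u : Fin d → ℝ) (a : Fin d) (n : ℕ) :
    ∏ m, u m ^ (if m = a then n else 0) = u a ^ n := by
  rw [Finset.prod_eq_single a (fun b _ hb => by rw [if_neg hb, pow_zero]) (by simp), if_pos rfl]

lemma mono_eq_prod {d : ℕ} (p i j k l : Fin d) (u : Fin d → ℝ) :
    u i * u j * u k * u l * u p ^ 4 = ∏ m, u m ^ exps p i j k l m := by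
  simp only [exps, pow_add, Finset.prod_mul_distrib, prod_pow_single, pow_one]

lemma integral_monoM {d : ℕ} (p i j k l : Fin d) :
    ∫ u, u i * u j * u k * u l * u p ^ 4 ∂(stdGaussianVec d) = ∏ m, M (exps p i j k l m) := by
  rw [← integral_monomial]
  congr 1 with u
  exact mono_eq_prod p i j k l u

lemma integrable_mono {d : ℕ} (p i j k l : Fin d) :
    Integrable (fun u => u i * u j * u k * u l * u p ^ 4) (stdGaussianVec d) :=
  (integrable_monomial (exps p i j k l)).congr
    (Filter.Eventually.of_forall fun u => (mono_eq_prod p i j k l u).symm)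

lemma sum_ite_const {α β : Type*} [Fintype α] [AddCommMonoid β] (c : Prop) [Decidable c] (f : α → β) :
    (∑ x : α, if c then f x else 0) = if c then ∑ x, f x else 0 := by split <;> simp

lemma offdiag_split {d : ℕ} (f : Fin d → Fin d → ℝ) (hsym : ∀ a b, f a b = f b a) :
    ∑ i, ∑ j, f i j
      = 2 * (∑ i, ∑ j ∈ Finset.univ.filter (fun j => j < i), f i j) + ∑ i, f i i := by
  have point : ∀ (i j : Fin d), f i j
      = (if j < i then f i j else 0) + (if i < j then f i j else 0)
        + (if j = i then f i j else 0) := by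
    intro i j
    rcases lt_trichotomy i j with h|h|h
    · simp [h, asymm h, h.ne, h.ne']
    · subst h; simp [lt_irrefl]
    · simp [h, asymm h, h.ne, h.ne']
  calc ∑ i, ∑ j, f i j
      = ∑ i : Fin d, ∑ j : Fin d, ((if j < i then f i j else 0) + (if i < j then f i j else 0)
          + (if j = i then f i j else 0)) :=
        Finset.sum_congr rfl fun i _ => Finset.sum_congr rfl fun j _ => point i j
    _ = (∑ i : Fin d, ∑ j : Fin d, if j < i then f i j else 0)
        + (∑ i : Fin d, ∑ j : Fin d, if i < j then f i j else 0)
        + (∑ i : Fin d, ∑ j : Fin d, if j = i then f i j else 0) := by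
        simp [Finset.sum_add_distrib]
    _ = (∑ i, ∑ j ∈ Finset.univ.filter (fun j => j < i), f i j)
        + (∑ i, ∑ j ∈ Finset.univ.filter (fun j => j < i), f i j) + ∑ i, f i i := by
        congr 1
        · congr 1
          · exact Finset.sum_congr rfl fun i _ => (Finset.sum_filter _ _).symm
          · rw [Finset.sum_comm]
            refine Finset.sum_congr rfl fun j _ => ?_
            rw [← Finset.sum_filter]
            exact Finset.sum_congr rfl fun i _ => hsym i j
        · refine Finset.sum_congr rfl fun i _ => ?_
          simp [Finset.sum_ite_eq']
    _ = _ := by ring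

lemma psplit {d : ℕ} (g : Fin d → ℝ) (p : Fin d) :
    (∑ i ∈ Finset.univ.filter (fun i => p < i), g i)
      + (∑ j ∈ Finset.univ.filter (fun j => j < p), g j) = (∑ i, g i) - g p := by
  rw [Finset.sum_filter, Finset.sum_filter, ← Finset.sum_add_distrib]
  have point : ∀ i : Fin d, ((if p < i then g i else 0) + (if i < p then g i else 0))
      = g i - (if i = p then g i else 0) := by
    intro i
    rcases lt_trichotomy i p with h|h|h
    · simp [h, asymm h, h.ne, h.ne']
    · subst h; simp [lt_irrefl]
    · simp [h, asymm h, h.ne, h.ne']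
  rw [Finset.sum_congr rfl fun i _ => point i, Finset.sum_sub_distrib]
  congr 1
  simp [Finset.sum_ite_eq']

end Aux

theorem second_moment_quadForm_up_sq {d : ℕ} (hd : 1 ≤ d)
    (A : Matrix (Fin d) (Fin d) ℝ) (p : Fin d) :
    ∫ u, (quadForm A u * (u p) ^ 2) ^ 2 ∂(stdGaussianVec d)
      = 3 * (∑ i, A i i) ^ 2 + 6 * (∑ i, (A i i) ^ 2)
        + 24 * A p p * (∑ i, A i i) + 72 * (A p p) ^ 2
        + 3 * (∑ i, ∑ j ∈ Finset.univ.filter (fun j => j < i), (A i j + A j i) ^ 2)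
        + 12 * (∑ i ∈ Finset.univ.filter (fun i => p < i), (A i p + A p i) ^ 2)
        + 12 * (∑ j ∈ Finset.univ.filter (fun j => j < p), (A p j + A j p) ^ 2) := by
  have expand : ∀ u : Fin d → ℝ, (quadForm A u * (u p)^2)^2
      = ∑ i, ∑ j, ∑ k, ∑ l, A i j * A k l * (u i * u j * u k * u l * u p ^ 4) := by
    intro u
    simp only [quadForm, pow_two, Finset.sum_mul, Finset.mul_sum]
    exact Finset.sum_congr rfl fun i _ => Finset.sum_congr rfl fun j _ =>
      Finset.sum_congr rfl fun k _ => Finset.sum_congr rfl fun l _ => by ring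
  have hI : ∀ i j k l : Fin d,
      Integrable (fun u => A i j * A k l * (u i * u j * u k * u l * u p ^ 4)) (stdGaussianVec d) :=
    fun i j k l => (integrable_mono p i j k l).const_mul _
  calc ∫ u, (quadForm A u * (u p)^2)^2 ∂(stdGaussianVec d)
      = ∫ u, ∑ i, ∑ j, ∑ k, ∑ l, A i j * A k l * (u i * u j * u k * u l * u p ^ 4)
          ∂(stdGaussianVec d) :=
        integral_congr_ae (Filter.Eventually.of_forall fun u => expand u)
    _ = ∑ i, ∑ j, ∑ k, ∑ l, A i j * A k l * (∏ m, M (exps p i j k l m)) := by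
        rw [integral_finset_sum _ (fun i _ => integrable_finset_sum _ (fun j _ =>
          integrable_finset_sum _ (fun k _ => integrable_finset_sum _ (fun l _ => hI i j k l))))]
        refine Finset.sum_congr rfl fun i _ => ?_
        rw [integral_finset_sum _ (fun j _ => integrable_finset_sum _ (fun k _ =>
          integrable_finset_sum _ (fun l _ => hI i j k l)))]
        refine Finset.sum_congr rfl fun j _ => ?_
        rw [integral_finset_sum _ (fun k _ => integrable_finset_sum _ (fun l _ => hI i j k l))]
        refine Finset.sum_congr rfl fun k _ => ?_
        rw [integral_finset_sum _ (fun l _ => hI i j k l)]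
        refine Finset.sum_congr rfl fun l _ => ?_
        rw [integral_const_mul, integral_monoM]
    _ = ∑ i, ∑ j, ∑ k, ∑ l, A i j * A k l *
          (3*(Dd i j * Dd k l + Dd i k * Dd j l + Dd i l * Dd j k)
            + 12*(Dd p i * Dd p j * Dd k l + Dd p i * Dd p k * Dd j l + Dd p i * Dd p l * Dd j k
                + Dd p j * Dd p k * Dd i l + Dd p j * Dd p l * Dd i k + Dd p k * Dd p l * Dd i j)
            + 24*(Dd p i * Dd p j * Dd p k * Dd p l)) :=
        Finset.sum_congr rfl fun i _ => Finset.sum_congr rfl fun j _ =>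
          Finset.sum_congr rfl fun k _ => Finset.sum_congr rfl fun l _ => by rw [Phi_eval]
    _ = _ := by
        simp only [Dd, mul_ite, ite_mul, mul_one, one_mul, mul_zero, zero_mul, mul_add,
          Finset.sum_add_distrib, Finset.sum_ite_eq, Finset.sum_ite_eq', Finset.mem_univ, if_true,
          add_zero, zero_add, Finset.sum_const_zero, sum_ite_const]
        -- now pure algebra
        have h1 : (∑ x : Fin d, ∑ y : Fin d, A x x * A y y * 3) = 3 * (∑ i, A i i)^2 := by
          rw [pow_two, Finset.sum_mul_sum]
          simp only [Finset.mul_sum]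
          exact Finset.sum_congr rfl fun x _ => Finset.sum_congr rfl fun y _ => by ring
        have h2 : (∑ x : Fin d, ∑ y : Fin d, A x y * A x y * 3)
            = 3 * ∑ x : Fin d, ∑ y : Fin d, A x y * A x y := by
          simp only [Finset.mul_sum]
          exact Finset.sum_congr rfl fun x _ => Finset.sum_congr rfl fun y _ => by ring
        have h3 : (∑ x : Fin d, ∑ y : Fin d, A x y * A y x * 3)
            = 3 * ∑ x : Fin d, ∑ y : Fin d, A x y * A y x := by
          simp only [Finset.mul_sum]
          exact Finset.sum_congr rfl fun x _ => Finset.sum_congr rfl fun y _ => by ring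
        have hS1 : (∑ x : Fin d, A p p * A x x * 12) = 12 * A p p * (∑ i, A i i) := by
          simp only [Finset.mul_sum]
          exact Finset.sum_congr rfl fun x _ => by ring
        have hS6 : (∑ x : Fin d, A x x * A p p * 12) = 12 * A p p * (∑ i, A i i) := by
          simp only [Finset.mul_sum]
          exact Finset.sum_congr rfl fun x _ => by ring
        have hS2 : (∑ x : Fin d, A p x * A p x * 12) = 12 * ∑ x : Fin d, A p x * A p x := by
          simp only [Finset.mul_sum]
          exact Finset.sum_congr rfl fun x _ => by ring
        have hS5 : (∑ x : Fin d, A x p * A x p * 12) = 12 * ∑ x : Fin d, A x p * A x p := by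
          simp only [Finset.mul_sum]
          exact Finset.sum_congr rfl fun x _ => by ring
        have hS3 : (∑ x : Fin d, A p x * A x p * 12) = 12 * ∑ x : Fin d, A x p * A p x := by
          simp only [Finset.mul_sum]
          exact Finset.sum_congr rfl fun x _ => by ring
        have hS4 : (∑ x : Fin d, A x p * A p x * 12) = 12 * ∑ x : Fin d, A x p * A p x := by
          simp only [Finset.mul_sum]
          exact Finset.sum_congr rfl fun x _ => by ring
        have hOff := offdiag_split (fun a b => (A a b + A b a)^2) (fun a b => by ring)
        have hexp : (∑ i : Fin d, ∑ j : Fin d, (A i j + A j i)^2)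
            = 2 * (∑ x : Fin d, ∑ y : Fin d, A x y * A x y)
              + 2 * (∑ x : Fin d, ∑ y : Fin d, A x y * A y x) := by
          have e1 : ∀ i j : Fin d, (A i j + A j i)^2
              = A i j * A i j + A j i * A j i + 2 * (A i j * A j i) := fun i j => by ring
          calc (∑ i : Fin d, ∑ j : Fin d, (A i j + A j i)^2)
              = (∑ i : Fin d, ∑ j : Fin d, A i j * A i j)
                + (∑ i : Fin d, ∑ j : Fin d, A j i * A j i)
                + (∑ i : Fin d, ∑ j : Fin d, 2 * (A i j * A j i)) := by
                simp only [Finset.sum_congr rfl fun i (_ : i ∈ Finset.univ) =>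
                  Finset.sum_congr rfl fun j (_ : j ∈ Finset.univ) => e1 i j]
                simp [Finset.sum_add_distrib]
            _ = _ := by
                rw [Finset.sum_comm (f := fun i j => A j i * A j i)]
                rw [show (∑ i : Fin d, ∑ j : Fin d, 2 * (A i j * A j i))
                  = 2 * ∑ i : Fin d, ∑ j : Fin d, A i j * A j i by
                    simp only [Finset.mul_sum]]
                ring
        have hdiag : (∑ i : Fin d, (A i i + A i i)^2) = 4 * ∑ i, (A i i)^2 := by
          rw [Finset.mul_sum]; exact Finset.sum_congr rfl fun i _ => by ring
        have hP := psplit (fun x => (A x p + A p x)^2) p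
        have hP2 : (∑ j ∈ Finset.univ.filter (fun j => j < p), (A p j + A j p) ^ 2)
            = ∑ j ∈ Finset.univ.filter (fun j => j < p), (fun x => (A x p + A p x)^2) j :=
          Finset.sum_congr rfl fun j _ => by ring
        have hPexp : (∑ x : Fin d, (A x p + A p x)^2)
            = (∑ x : Fin d, A x p * A x p) + (∑ x : Fin d, A p x * A p x)
              + 2 * ∑ x : Fin d, A x p * A p x := by
          simp only [Finset.mul_sum]
          rw [← Finset.sum_add_distrib, ← Finset.sum_add_distrib]
          exact Finset.sum_congr rfl fun x _ => by ring
        rw [h1, h2, h3, hS1, hS2, hS3, hS4, hS5, hS6] at *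
        rw [hP2]
        simp only at hOff hP
        linarith [hOff, hP, hexp, hdiag, hPexp]
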